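/- Let A be a finite-dimensional ternary Jordan algebra over a field F with char F ≠ 2 such that the multiplication is nonzero (there exist x,y,z ∈ A with [[x,y,z]] ≠ 0) and every linear endomorphism of A is a quasiderivation (QDer(A) = gl(A)). Then dim A ≤ 2. Moreover: (1) if dim A = 1, then A is a simple ternary Jordan algebra; (2) if dim A = 2, then the span of {[[x,y,z]] : x,y,z ∈ A} equals A. -/
import Mathlib


/-- A ternary Jordan algebra structure: a totally symmetric trilinear multiplication
`t` on a vector space such that every commutator of right multiplication operators
is a derivation. -/
structure IsTernaryJordan (F : Type*) [Field F] {A : Type*} [AddCommGroup A]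
    [Module F A] (t : A → A → A → A) : Prop where
  add_left : ∀ x y z w : A, t (x + y) z w = t x z w + t y z w
  smul_left : ∀ (c : F) (x y z : A), t (c • x) y z = c • t x y z
  symm12 : ∀ x y z : A, t x y z = t y x z
  symm23 : ∀ x y z : A, t x y z = t x z y
  comm_der : ∀ x₂ x₃ y₂ y₃ a b c : A,
    t (t (t a b c) x₂ x₃) y₂ y₃ - t (t (t a b c) y₂ y₃) x₂ x₃ =
      t (t (t a x₂ x₃) y₂ y₃ - t (t a y₂ y₃) x₂ x₃) b c +
        t a (t (t b x₂ x₃) y₂ y₃ - t (t b y₂ y₃) x₂ x₃) c +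
          t a b (t (t c x₂ x₃) y₂ y₃ - t (t c y₂ y₃) x₂ x₃)
/-- A quasiderivation of the ternary algebra `(A, t)`. -/
def IsQDer (F : Type*) [Field F] {A : Type*} [AddCommGroup A] [Module F A]
    (t : A → A → A → A) (f : A →ₗ[F] A) : Prop :=
  ∃ f' : A →ₗ[F] A, ∀ x y z : A,
    t (f x) y z + t x (f y) z + t x y (f z) = f' (t x y z)

section TJAux

open Module

variable {F : Type*} [Field F] {A : Type*} [AddCommGroup A] [Module F A]
variable {t : A → A → A → A}

lemma TJ.symm13 (ht : IsTernaryJordan F t) (x y z : A) : t x y z = t z y x := by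
  calc t x y z = t y x z := ht.symm12 x y z
    _ = t y z x := ht.symm23 y x z
    _ = t z y x := ht.symm12 y z x

lemma TJ.smul2 (ht : IsTernaryJordan F t) (c : F) (x y z : A) :
    t x (c • y) z = c • t x y z := by
  calc t x (c • y) z = t (c • y) x z := ht.symm12 x (c • y) z
    _ = c • t y x z := ht.smul_left c y x z
    _ = c • t x y z := by rw [ht.symm12 y x z]

lemma TJ.smul3 (ht : IsTernaryJordan F t) (c : F) (x y z : A) :
    t x y (c • z) = c • t x y z := by
  calc t x y (c • z) = t (c • z) y x := TJ.symm13 ht x y (c • z)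
    _ = c • t z y x := ht.smul_left c z y x
    _ = c • t x y z := by rw [TJ.symm13 ht z y x]

lemma TJ.add3 (ht : IsTernaryJordan F t) (x y a b : A) :
    t x y (a + b) = t x y a + t x y b := by
  calc t x y (a + b) = t (a + b) y x := TJ.symm13 ht x y (a + b)
    _ = t a y x + t b y x := ht.add_left a b y x
    _ = t x y a + t x y b := by rw [TJ.symm13 ht a y x, TJ.symm13 ht b y x]

/-- Right multiplication as a linear map in the third slot. -/
def TJ.R (ht : IsTernaryJordan F t) (x y : A) : A →ₗ[F] A where
  toFun z := t x y z
  map_add' a b := TJ.add3 ht x y a b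
  map_smul' c a := TJ.smul3 ht c x y a

@[simp] lemma TJ.R_apply (ht : IsTernaryJordan F t) (x y z : A) :
    TJ.R ht x y z = t x y z := rfl

lemma TJ.key (ht : IsTernaryJordan F t) (hq : ∀ D : A →ₗ[F] A, IsQDer F t D)
    (φ : Module.Dual F A) (u : A) :
    ∃ g : A →ₗ[F] A, ∀ x y z : A,
      φ x • t u y z + φ y • t u x z + φ z • t u x y = g (t x y z) := by
  obtain ⟨g, hg⟩ := hq (φ.smulRight u)
  refine ⟨g, fun x y z => ?_⟩
  have h := hg x y z
  rw [LinearMap.smulRight_apply, LinearMap.smulRight_apply, LinearMap.smulRight_apply,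
    ht.smul_left, TJ.smul2 ht, TJ.smul3 ht, ht.symm12 x u z, TJ.symm13 ht x y u,
    ht.symm23 u y x] at h
  exact h

lemma TJ.vanish (ht : IsTernaryJordan F t) (hq : ∀ D : A →ₗ[F] A, IsQDer F t D)
    (φ : Module.Dual F A) (u : A) {x y z : A} (h0 : t x y z = 0) :
    φ x • t u y z + φ y • t u x z + φ z • t u x y = 0 := by
  obtain ⟨g, hg⟩ := TJ.key ht hq φ u
  rw [hg x y z, h0, map_zero]

lemma TJ.exists_dual (p : Submodule F A) {x : A} (hx : x ∉ p) :
    ∃ φ : Module.Dual F A, φ x = 1 ∧ ∀ v ∈ p, φ v = 0 := by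
  obtain ⟨f, hf, hmap⟩ := p.exists_dual_map_eq_bot_of_notMem hx inferInstance
  refine ⟨(f x)⁻¹ • f, by simp [inv_mul_cancel₀ hf], fun v hv => ?_⟩
  have hv0 : f v = 0 := by
    have hm : f v ∈ p.map f := Submodule.mem_map_of_mem hv
    rw [hmap] at hm
    simpa using hm
  simp [hv0]

lemma TJ.allzero (ht : IsTernaryJordan F t) (hq : ∀ D : A →ₗ[F] A, IsQDer F t D)
    {y : A} (hy : y ≠ 0) (h : ∀ u v : A, t u v y = 0) (a b c : A) : t a b c = 0 := by
  obtain ⟨φ, hφ1, -⟩ := TJ.exists_dual (⊥ : Submodule F A) (by simpa using hy)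
  have h0 : t y b c = 0 := by rw [TJ.symm13 ht]; exact h c b
  have hv := TJ.vanish ht hq φ a h0
  have e1 : t a y c = 0 := by rw [ht.symm23]; exact h a c
  have e2 : t a y b = 0 := by rw [ht.symm23]; exact h a b
  rw [hφ1, one_smul, e1, e2, smul_zero, smul_zero, add_zero, add_zero] at hv
  exact hv

lemma TJ.pairkill (ht : IsTernaryJordan F t) (hq : ∀ D : A →ₗ[F] A, IsQDer F t D)
    {y z : A} (φy φz : Module.Dual F A)
    (h1 : φy y = 1) (hyz : φy z = 0) (h3 : φz z = 1) (h4 : φz y = 0)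
    (h : ∀ w, t w y z = 0) (a b c : A) : t a b c = 0 := by
  have hz : z ≠ 0 := by rintro rfl; rw [map_zero] at h3; exact one_ne_zero h3.symm
  refine TJ.allzero ht hq hz (fun u w => ?_) a b c
  have hv := TJ.vanish ht hq φy u (h w)
  rw [h u, smul_zero, h1, one_smul, hyz, zero_smul, zero_add, add_zero] at hv
  exact hv

lemma TJ.ne_xxy (ht : IsTernaryJordan F t) (hq : ∀ D : A →ₗ[F] A, IsQDer F t D)
    (h2 : (2 : F) ≠ 0) (hnz : ∃ x y z : A, t x y z ≠ 0)
    {x y : A} (α β : Module.Dual F A) (hαx : α x = 1) (hαy : α y = 0)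
    (hβy : β y = 1) (hβx : β x = 0) : t x x y ≠ 0 := by
  intro h0
  have hxy : ∀ u, t u x y = 0 := by
    intro u
    have hv := TJ.vanish ht hq α u h0
    rw [hαx, one_smul, hαy, zero_smul, add_zero] at hv
    have h2v : (2 : F) • t u x y = 0 := by rw [two_smul]; exact hv
    exact (smul_eq_zero.mp h2v).resolve_left h2
  obtain ⟨a, b, c, hne⟩ := hnz
  exact hne (TJ.pairkill ht hq α β hαx hαy hβy hβx hxy a b c)

lemma TJ.ne_xyz (ht : IsTernaryJordan F t) (hq : ∀ D : A →ₗ[F] A, IsQDer F t D)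
    (hnz : ∃ x y z : A, t x y z ≠ 0)
    {x y z : A} (α β γ : Module.Dual F A)
    (hαx : α x = 1) (hαy : α y = 0) (hαz : α z = 0)
    (hβy : β y = 1) (hβz : β z = 0) (hγz : γ z = 1) (hγy : γ y = 0) :
    t x y z ≠ 0 := by
  intro h0
  have hyz : ∀ u, t u y z = 0 := by
    intro u
    have hv := TJ.vanish ht hq α u h0
    rw [hαx, one_smul, hαy, zero_smul, hαz, zero_smul, add_zero, add_zero] at hv
    exact hv
  obtain ⟨a, b, c, hne⟩ := hnz
  exact hne (TJ.pairkill ht hq β γ hβy hβz hγz hγy hyz a b c)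

end TJAux

/-- if the multiplication of a finite-dimensional ternary Jordan
algebra is nonzero and every linear endomorphism is a quasiderivation, then
`dim A ≤ 2`; if `dim A = 1` then `A` is simple, and if `dim A = 2` then
`[[A,A,A]] = A`. -/
theorem stmt15 {F : Type*} [Field F] {A : Type*} [AddCommGroup A] [Module F A]
    [FiniteDimensional F A] (h2 : (2 : F) ≠ 0)
    (t : A → A → A → A) (ht : IsTernaryJordan F t)
    (hnz : ∃ x y z : A, t x y z ≠ 0)
    (hq : ∀ D : A →ₗ[F] A, IsQDer F t D) :
    Module.finrank F A ≤ 2 ∧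
      (Module.finrank F A = 1 →
        (∃ x y z : A, t x y z ≠ 0) ∧
          ∀ I : Submodule F A, (∀ a ∈ I, ∀ x y : A, t a x y ∈ I) →
            I = ⊥ ∨ I = ⊤) ∧
      (Module.finrank F A = 2 →
        Submodule.span F {w : A | ∃ x y z : A, w = t x y z} = ⊤) := by
  classical
  refine ⟨?_, ?_, ?_⟩
  · -- finrank ≤ 2
    by_contra hn
    push_neg at hn
    have h0n : 0 < Module.finrank F A := by omega
    have h1n : 1 < Module.finrank F A := by omega
    set b := Module.finBasis F A with hb
    set i0 : Fin (Module.finrank F A) := ⟨0, h0n⟩ with hi0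
    set i1 : Fin (Module.finrank F A) := ⟨1, h1n⟩ with hi1
    have hi : i0 ≠ i1 := by simp [hi0, hi1, Fin.ext_iff]
    set e1 := b i0 with he1
    set y := b i1 with hy
    set φ1 := b.coord i0 with hφ1
    set φ2 := b.coord i1 with hφ2
    have c00 : φ1 e1 = 1 := by simp [hφ1, he1]
    have c01 : φ1 y = 0 := by simp [hφ1, hy, Finsupp.single_apply, hi.symm]
    have c11 : φ2 y = 1 := by simp [hφ2, hy]
    have c10 : φ2 e1 = 0 := by simp [hφ2, he1, Finsupp.single_apply, hi]
    have hDmem : ∀ z ∈ LinearMap.ker (φ1.prod φ2), φ1 z = 0 ∧ φ2 z = 0 := by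
      intro z hz
      have h := LinearMap.mem_ker.mp hz
      rw [LinearMap.prod_apply] at h
      exact Prod.mk_eq_zero.mp h
    -- nonvanishing facts
    have hTxx : ∀ z ∈ LinearMap.ker φ1, z ≠ 0 → t e1 e1 z ≠ 0 := by
      intro z hzH hz
      have hz1 : φ1 z = 0 := LinearMap.mem_ker.mp hzH
      have hns : z ∉ Submodule.span F {e1} := by
        intro hmem
        obtain ⟨c, rfl⟩ := Submodule.mem_span_singleton.mp hmem
        rw [map_smul, c00, smul_eq_mul, mul_one] at hz1
        exact hz (by rw [hz1, zero_smul])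
      obtain ⟨β, hβz, hβ0⟩ := TJ.exists_dual _ hns
      exact TJ.ne_xxy ht hq h2 hnz φ1 β c00 hz1 hβz
        (hβ0 e1 (Submodule.mem_span_singleton_self e1))
    have hnspan : ∀ z : A, φ2 z = 0 → z ≠ 0 → z ∉ Submodule.span F {y} := by
      intro z hz2 hz hmem
      obtain ⟨c, rfl⟩ := Submodule.mem_span_singleton.mp hmem
      rw [map_smul, c11, smul_eq_mul, mul_one] at hz2
      exact hz (by rw [hz2, zero_smul])
    have hTyy : ∀ z ∈ LinearMap.ker (φ1.prod φ2), z ≠ 0 → t y y z ≠ 0 := by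
      intro z hzD hz
      obtain ⟨hz1, hz2⟩ := hDmem z hzD
      obtain ⟨β, hβz, hβ0⟩ := TJ.exists_dual _ (hnspan z hz2 hz)
      exact TJ.ne_xxy ht hq h2 hnz φ2 β c11 hz2 hβz
        (hβ0 y (Submodule.mem_span_singleton_self y))
    have hTxy : ∀ z ∈ LinearMap.ker (φ1.prod φ2), z ≠ 0 → t e1 y z ≠ 0 := by
      intro z hzD hz
      obtain ⟨hz1, hz2⟩ := hDmem z hzD
      obtain ⟨γ, hγz, hγ0⟩ := TJ.exists_dual _ (hnspan z hz2 hz)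
      exact TJ.ne_xyz ht hq hnz φ1 φ2 γ c00 c01 hz1 c11 hz2 hγz
        (hγ0 y (Submodule.mem_span_singleton_self y))
    obtain ⟨g, hg⟩ := TJ.key ht hq φ1 e1
    -- eigen relations
    have heig2 : ∀ v ∈ (LinearMap.ker φ1).map (TJ.R ht e1 e1), g v = v + v := by
      rintro v ⟨z, hzH, rfl⟩
      have hz1 : φ1 z = 0 := LinearMap.mem_ker.mp hzH
      have h := hg e1 e1 z
      rw [c00, one_smul, hz1, zero_smul, add_zero] at h
      exact h.symm
    have heig1 : ∀ v ∈ (LinearMap.ker (φ1.prod φ2)).map (TJ.R ht e1 y), g v = v := by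
      rintro v ⟨z, hzD, rfl⟩
      obtain ⟨hz1, hz2⟩ := hDmem z hzD
      have h := hg e1 y z
      rw [c00, one_smul, c01, zero_smul, hz1, zero_smul, add_zero, add_zero] at h
      exact h.symm
    have heig0 : ∀ v ∈ (LinearMap.ker (φ1.prod φ2)).map (TJ.R ht y y), g v = 0 := by
      rintro v ⟨z, hzD, rfl⟩
      obtain ⟨hz1, hz2⟩ := hDmem z hzD
      have h := hg y y z
      simp only [c01, hz1, zero_smul, add_zero, zero_add] at h
      exact h.symm
    -- finranks of the three images
    have hrk : ∀ (x0 y0 : A) (p : Submodule F A),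
        (∀ z ∈ p, z ≠ 0 → t x0 y0 z ≠ 0) →
        Module.finrank F (p.map (TJ.R ht x0 y0)) = Module.finrank F p := by
      intro x0 y0 p hinjcond
      have hinj : Function.Injective ((TJ.R ht x0 y0).comp p.subtype) := by
        rw [← LinearMap.ker_eq_bot, LinearMap.ker_eq_bot']
        rintro ⟨z, hzp⟩ hz0
        have hz0' : t x0 y0 z = 0 := hz0
        have hz : z = 0 := by
          by_contra hzz
          exact hinjcond z hzp hzz hz0'
        exact Subtype.ext hz
      have hr : LinearMap.range ((TJ.R ht x0 y0).comp p.subtype) = p.map (TJ.R ht x0 y0) := by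
        rw [LinearMap.range_comp, Submodule.range_subtype]
      rw [← hr, LinearMap.finrank_range_of_inj hinj]
    have frank2 := hrk e1 e1 (LinearMap.ker φ1) hTxx
    have frank1 := hrk e1 y (LinearMap.ker (φ1.prod φ2)) hTxy
    have frank0 := hrk y y (LinearMap.ker (φ1.prod φ2)) hTyy
    set V2 := (LinearMap.ker φ1).map (TJ.R ht e1 e1) with hV2
    set V1 := (LinearMap.ker (φ1.prod φ2)).map (TJ.R ht e1 y) with hV1
    set V0 := (LinearMap.ker (φ1.prod φ2)).map (TJ.R ht y y) with hV0
    have hd12 : V1 ⊓ V2 = ⊥ := by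
      rw [eq_bot_iff]
      rintro v ⟨hv1, hv2⟩
      have ha := heig1 v hv1
      have hbb := heig2 v hv2
      have hv0 : v = 0 := left_eq_add.mp (ha.symm.trans hbb)
      exact (Submodule.mem_bot F).mpr hv0
    have hd0 : V0 ⊓ (V1 ⊔ V2) = ⊥ := by
      rw [eq_bot_iff]
      rintro v ⟨hv0, hvs⟩
      obtain ⟨v1, hv1, v2, hv2, rfl⟩ := Submodule.mem_sup.mp hvs
      have h0' := heig0 _ hv0
      rw [map_add, heig1 _ hv1, heig2 _ hv2] at h0'
      have hneg : v1 + v2 = -v2 :=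
        eq_neg_of_add_eq_zero_left (by rw [add_assoc]; exact h0')
      have hvV2 : v1 + v2 ∈ V2 := hneg ▸ V2.neg_mem hv2
      have h2'' := heig2 _ hvV2
      have hsum0 : v1 + v2 = 0 := by
        have h2v : (2 : F) • (v1 + v2) = 0 := by
          rw [two_smul]
          exact h2''.symm.trans (heig0 _ hv0)
        exact (smul_eq_zero.mp h2v).resolve_left h2
      exact (Submodule.mem_bot F).mpr hsum0
    have hsup12 := Submodule.finrank_sup_add_finrank_inf_eq V1 V2
    rw [hd12, finrank_bot, add_zero] at hsup12
    have hsup0 := Submodule.finrank_sup_add_finrank_inf_eq V0 (V1 ⊔ V2)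
    rw [hd0, finrank_bot, add_zero] at hsup0
    have hle : Module.finrank F ↥(V0 ⊔ (V1 ⊔ V2)) ≤ Module.finrank F A :=
      Submodule.finrank_le _
    have hkerH := LinearMap.finrank_range_add_finrank_ker φ1
    have hr1 : Module.finrank F (LinearMap.range φ1) ≤ 1 := by
      have h' := Submodule.finrank_le (LinearMap.range φ1)
      simpa using h'
    have hkerD := LinearMap.finrank_range_add_finrank_ker (φ1.prod φ2)
    have hr2 : Module.finrank F (LinearMap.range (φ1.prod φ2)) ≤ 2 := by
      have h' := Submodule.finrank_le (LinearMap.range (φ1.prod φ2))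
      rw [Module.finrank_prod, Module.finrank_self] at h'
      omega
    omega
  · -- finrank = 1 : simplicity
    intro hrank
    refine ⟨hnz, fun I _ => ?_⟩
    by_cases hbot : I = ⊥
    · exact Or.inl hbot
    · right
      have h1 : Module.finrank F I ≠ 0 := fun h => hbot (Submodule.finrank_eq_zero.mp h)
      have h2' : Module.finrank F I ≤ Module.finrank F A := Submodule.finrank_le I
      exact Submodule.eq_top_of_finrank_eq (by omega)
  · -- finrank = 2 : products span
    intro hrank
    have h0n : 0 < Module.finrank F A := by omega
    have h1n : 1 < Module.finrank F A := by omega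
    set b := Module.finBasis F A with hb
    set i0 : Fin (Module.finrank F A) := ⟨0, h0n⟩ with hi0
    set i1 : Fin (Module.finrank F A) := ⟨1, h1n⟩ with hi1
    have hi : i0 ≠ i1 := by simp [hi0, hi1, Fin.ext_iff]
    set e1 := b i0 with he1
    set e2 := b i1 with he2
    set φ1 := b.coord i0 with hφ1
    set φ2 := b.coord i1 with hφ2
    have c00 : φ1 e1 = 1 := by simp [hφ1, he1]
    have c01 : φ1 e2 = 0 := by simp [hφ1, he2, Finsupp.single_apply, hi.symm]
    have c11 : φ2 e2 = 1 := by simp [hφ2, he2]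
    have c10 : φ2 e1 = 0 := by simp [hφ2, he1, Finsupp.single_apply, hi]
    have hv1 : t e1 e1 e2 ≠ 0 := TJ.ne_xxy ht hq h2 hnz φ1 φ2 c00 c01 c11 c10
    have hv2 : t e1 e2 e2 ≠ 0 := by
      rw [TJ.symm13 ht e1 e2 e2]
      exact TJ.ne_xxy ht hq h2 hnz φ2 φ1 c11 c10 c00 c01
    obtain ⟨g, hg⟩ := TJ.key ht hq φ1 e1
    have hg1 : g (t e1 e2 e2) = t e1 e2 e2 := by
      have h := hg e1 e2 e2
      simp only [c00, one_smul, c01, zero_smul, add_zero] at h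
      exact h.symm
    have hg2 : g (t e1 e1 e2) = t e1 e1 e2 + t e1 e1 e2 := by
      have h := hg e1 e1 e2
      rw [c00, one_smul, c01, zero_smul, add_zero] at h
      exact h.symm
    have hli : LinearIndependent F ![t e1 e1 e2, t e1 e2 e2] := by
      rw [LinearIndependent.pair_iff]
      intro s r hsr
      have hgsr : g (s • t e1 e1 e2 + r • t e1 e2 e2) = 0 := by rw [hsr, map_zero]
      rw [map_add, map_smul, map_smul, hg1, hg2, smul_add] at hgsr
      have h3 : s • t e1 e1 e2 + (s • t e1 e1 e2 + r • t e1 e2 e2) = 0 := by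
        rw [← add_assoc]; exact hgsr
      rw [hsr, add_zero] at h3
      have hs : s = 0 := (smul_eq_zero.mp h3).resolve_right hv1
      have hr : r = 0 := by
        rw [hs, zero_smul, zero_add] at hsr
        exact (smul_eq_zero.mp hsr).resolve_right hv2
      exact ⟨hs, hr⟩
    have hrange : Set.range ![t e1 e1 e2, t e1 e2 e2] = {t e1 e1 e2, t e1 e2 e2} := by
      ext w
      simp [Fin.exists_fin_two, eq_comm, or_comm]
    have hfr : Module.finrank F
        (Submodule.span F ({t e1 e1 e2, t e1 e2 e2} : Set A)) = 2 := by
      have h' := finrank_span_eq_card hli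
      rw [hrange] at h'
      simpa using h'
    have hle : Submodule.span F ({t e1 e1 e2, t e1 e2 e2} : Set A) ≤
        Submodule.span F {w : A | ∃ x y z : A, w = t x y z} := by
      apply Submodule.span_le.mpr
      rintro w (rfl | rfl)
      · exact Submodule.subset_span ⟨e1, e1, e2, rfl⟩
      · exact Submodule.subset_span ⟨e1, e2, e2, rfl⟩
    have hge : 2 ≤ Module.finrank F
        (Submodule.span F {w : A | ∃ x y z : A, w = t x y z}) := by
      rw [← hfr]
      exact Submodule.finrank_mono hle
    have hub := Submodule.finrank_le (Submodule.span F {w : A | ∃ x y z : A, w = t x y z})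
    exact Submodule.eq_top_of_finrank_eq (by omega)
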